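/- arXiv:1912.06067 — 7 statements merged into one kernel-verified Lean document; each statement's English description precedes it below -/
import Mathlib

section
/- For all integers m ≥ 0, the q-deformed beta-binomial weights sum to one: ∑_{j=0}^{m} φ_{q,μ,ν}(j|m) = 1, where φ_{q,μ,ν}(j|m) = μ^j · ((ν/μ;q)_j (μ;q)_{m-j})/(ν;q)_m · (q;q)_m/((q;q)_j (q;q)_{m-j}). -/
open Finset

/-- The q-Pochhammer symbol `(x;q)_k = ∏_{i=0}^{k-1} (1 - q^i x)`. -/
noncomputable def qPoch (q x : ℝ) (k : ℕ) : ℝ := ∏ i ∈ Finset.range k, (1 - q ^ i * x)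

/-- The q-deformed beta-binomial weight `φ_{q,μ,ν}(j|m)`. -/
noncomputable def qHahnPhi (q μ ν : ℝ) (j m : ℕ) : ℝ :=
  μ ^ j * (qPoch q (ν / μ) j * qPoch q μ (m - j)) / qPoch q ν m *
    (qPoch q q m / (qPoch q q j * qPoch q q (m - j)))

/-- unnormalized weight -/
noncomputable def tW (q μ ν : ℝ) (m j : ℕ) : ℝ :=
  μ ^ j * qPoch q (ν / μ) j * qPoch q μ (m - j) *
    (qPoch q q m / (qPoch q q j * qPoch q q (m - j)))

noncomputable def Afun (q μ ν : ℝ) (m j : ℕ) : ℝ :=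
  μ ^ j * qPoch q (ν / μ) j * qPoch q μ (m - j + 1) *
    (qPoch q q m / (qPoch q q j * qPoch q q (m - j)))

noncomputable def Bfun (q μ ν : ℝ) (m j : ℕ) : ℝ :=
  μ ^ (j + 1) * qPoch q (ν / μ) (j + 1) * qPoch q μ (m - j) * q ^ (m - j) *
    (qPoch q q m / (qPoch q q j * qPoch q q (m - j)))

lemma qPoch_succ (q x : ℝ) (k : ℕ) : qPoch q x (k + 1) = qPoch q x k * (1 - q ^ k * x) :=
  Finset.prod_range_succ _ _

lemma qPoch_zero (q x : ℝ) : qPoch q x 0 = 1 := rfl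

lemma qPoch_q_pos (q : ℝ) (hq0 : 0 < q) (hq1 : q < 1) (k : ℕ) : 0 < qPoch q q k := by
  apply Finset.prod_pos
  intro i _
  have h : q ^ i * q = q ^ (i + 1) := by rw [pow_succ]
  rw [h]
  have : q ^ (i + 1) < 1 := pow_lt_one₀ hq0.le hq1 (Nat.succ_ne_zero i)
  linarith

lemma qPoch_q_ne (q : ℝ) (hq0 : 0 < q) (hq1 : q < 1) (k : ℕ) : qPoch q q k ≠ 0 :=
  (qPoch_q_pos q hq0 hq1 k).ne'

lemma AB_sum (q μ ν : ℝ) (hμ : μ ≠ 0) (m j : ℕ) (hj : j ≤ m) :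
    Afun q μ ν m j + Bfun q μ ν m j = (1 - q ^ m * ν) * tW q μ ν m j := by
  have hqm : q ^ (m - j) * q ^ j = q ^ m := by
    rw [← pow_add, Nat.sub_add_cancel hj]
  unfold Afun Bfun tW
  rw [qPoch_succ q μ (m - j), qPoch_succ q (ν / μ) j]
  have hν : μ * (ν / μ) = ν := mul_div_cancel₀ ν hμ
  set R := qPoch q (ν / μ) j
  set M := qPoch q μ (m - j)
  set C := qPoch q q m / (qPoch q q j * qPoch q q (m - j))
  have key : (1 - q ^ (m - j) * μ) + μ * (1 - q ^ j * (ν / μ)) * q ^ (m - j)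
      = 1 - q ^ m * ν := by
    have h1 : μ * (q ^ j * (ν / μ)) = q ^ j * ν := by
      rw [mul_comm (q ^ j) (ν / μ), ← mul_assoc, mul_div_cancel₀ ν hμ, mul_comm]
    linear_combination (-(q ^ (m - j))) * h1 - ν * hqm
  calc μ ^ j * R * (M * (1 - q ^ (m - j) * μ)) * C +
        μ ^ (j + 1) * (R * (1 - q ^ j * (ν / μ))) * M * q ^ (m - j) * C
      = μ ^ j * R * M * C *
        ((1 - q ^ (m - j) * μ) + μ * (1 - q ^ j * (ν / μ)) * q ^ (m - j)) := by ring
    _ = (1 - q ^ m * ν) * (μ ^ j * R * M * C) := by rw [key]; ring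

lemma pascal_core (q P A B α β : ℝ) (hA : A ≠ 0) (hB : B ≠ 0)
    (hα : 1 - α * q ≠ 0) (hβ : 1 - β * q ≠ 0) :
    P * (1 - α * β * q * q) / (A * (1 - α * q) * (B * (1 - β * q)))
      = P / (A * (1 - α * q) * B) + β * q * (P / (A * (B * (1 - β * q)))) := by
  field_simp
  ring

lemma pascal (q μ ν : ℝ) (hq0 : 0 < q) (hq1 : q < 1) (m j : ℕ) (hj : j < m) :
    tW q μ ν (m + 1) (j + 1) = Afun q μ ν m (j + 1) + Bfun q μ ν m j := by
  obtain ⟨k, hk⟩ : ∃ k, m = j + k + 1 := ⟨m - j - 1, by omega⟩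
  subst hk
  have e1 : j + k + 1 + 1 - (j + 1) = k + 1 := by omega
  have e2 : j + k + 1 - (j + 1) = k := by omega
  have e3 : j + k + 1 - (j + 1) + 1 = k + 1 := by omega
  have e4 : j + k + 1 - j = k + 1 := by omega
  unfold tW Afun Bfun
  rw [e1, e3, e2, e4]
  rw [qPoch_succ q q (j + k + 1), qPoch_succ q q j, qPoch_succ q q k]
  have hq_pow1 : q ^ (j + k + 1) = q ^ j * q ^ k * q := by
    rw [pow_add, pow_add, pow_one]
  have hq_pow2 : q ^ (k + 1) = q ^ k * q := by rw [pow_succ]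
  rw [hq_pow1, hq_pow2]
  set A := qPoch q q j with hAdef
  set B := qPoch q q k with hBdef
  have hA : A ≠ 0 := qPoch_q_ne q hq0 hq1 j
  have hB : B ≠ 0 := qPoch_q_ne q hq0 hq1 k
  have hα : 1 - q ^ j * q ≠ 0 := by
    have : q ^ (j + 1) < 1 := pow_lt_one₀ hq0.le hq1 (Nat.succ_ne_zero j)
    rw [pow_succ] at this; intro h; linarith [this]
  have hβ : 1 - q ^ k * q ≠ 0 := by
    have : q ^ (k + 1) < 1 := pow_lt_one₀ hq0.le hq1 (Nat.succ_ne_zero k)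
    rw [pow_succ] at this; intro h; linarith [this]
  have core := pascal_core q (qPoch q q (j + k + 1)) A B (q ^ j) (q ^ k) hA hB hα hβ
  have core' : qPoch q q (j + k + 1) * (1 - q ^ j * q ^ k * q * q) /
      (A * (1 - q ^ j * q) * (B * (1 - q ^ k * q)))
      = qPoch q q (j + k + 1) / (A * (1 - q ^ j * q) * B)
        + q ^ k * q * (qPoch q q (j + k + 1) / (A * (B * (1 - q ^ k * q)))) := by
    have := pascal_core q (qPoch q q (j + k + 1)) A B (q ^ j) (q ^ k) hA hB hα hβ
    convert this using 3 <;> ring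
  calc μ ^ (j + 1) * qPoch q (ν / μ) (j + 1) * qPoch q μ (k + 1) *
        (qPoch q q (j + k + 1) * (1 - q ^ j * q ^ k * q * q) /
          (A * (1 - q ^ j * q) * (B * (1 - q ^ k * q))))
      = μ ^ (j + 1) * qPoch q (ν / μ) (j + 1) * qPoch q μ (k + 1) *
        (qPoch q q (j + k + 1) / (A * (1 - q ^ j * q) * B)
          + q ^ k * q * (qPoch q q (j + k + 1) / (A * (B * (1 - q ^ k * q))))) := by
        rw [core']
    _ = μ ^ (j + 1) * qPoch q (ν / μ) (j + 1) * qPoch q μ (k + 1) *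
        (qPoch q q (j + k + 1) / (A * (1 - q ^ j * q) * B))
        + μ ^ (j + 1) * qPoch q (ν / μ) (j + 1) * qPoch q μ (k + 1) * (q ^ k * q) *
        (qPoch q q (j + k + 1) / (A * (B * (1 - q ^ k * q)))) := by ring

lemma tW_sum (q μ ν : ℝ) (hq0 : 0 < q) (hq1 : q < 1) (hμ : μ ≠ 0) (m : ℕ) :
    ∑ j ∈ Finset.range (m + 1), tW q μ ν m j = qPoch q ν m := by
  induction m with
  | zero => simp [tW, qPoch]
  | succ m ih =>
    have hfirst : tW q μ ν (m + 1) 0 = Afun q μ ν m 0 := by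
      unfold tW Afun
      simp [qPoch_zero, div_self (qPoch_q_ne q hq0 hq1 (m + 1)),
        div_self (qPoch_q_ne q hq0 hq1 m)]
    have hlast : tW q μ ν (m + 1) (m + 1) = Bfun q μ ν m m := by
      unfold tW Bfun
      simp [qPoch_zero, div_self (qPoch_q_ne q hq0 hq1 (m + 1)),
        div_self (qPoch_q_ne q hq0 hq1 m)]
    calc ∑ j ∈ Finset.range (m + 2), tW q μ ν (m + 1) j
        = (∑ j ∈ Finset.range m, tW q μ ν (m + 1) (j + 1) + tW q μ ν (m + 1) 0)
            + tW q μ ν (m + 1) (m + 1) := by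
          rw [Finset.sum_range_succ, Finset.sum_range_succ']
      _ = (∑ j ∈ Finset.range m, (Afun q μ ν m (j + 1) + Bfun q μ ν m j)
            + Afun q μ ν m 0) + Bfun q μ ν m m := by
          rw [hfirst, hlast]
          congr 2
          apply Finset.sum_congr rfl
          intro j hj
          exact pascal q μ ν hq0 hq1 m j (Finset.mem_range.mp hj)
      _ = (∑ j ∈ Finset.range m, Afun q μ ν m (j + 1) + Afun q μ ν m 0)
            + (∑ j ∈ Finset.range m, Bfun q μ ν m j + Bfun q μ ν m m) := by
          rw [Finset.sum_add_distrib]; ring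
      _ = ∑ j ∈ Finset.range (m + 1), Afun q μ ν m j
            + ∑ j ∈ Finset.range (m + 1), Bfun q μ ν m j := by
          rw [Finset.sum_range_succ', Finset.sum_range_succ]
      _ = ∑ j ∈ Finset.range (m + 1), (Afun q μ ν m j + Bfun q μ ν m j) := by
          rw [Finset.sum_add_distrib]
      _ = ∑ j ∈ Finset.range (m + 1), (1 - q ^ m * ν) * tW q μ ν m j := by
          apply Finset.sum_congr rfl
          intro j hj
          exact AB_sum q μ ν hμ m j (Nat.lt_succ_iff.mp (Finset.mem_range.mp hj))
      _ = (1 - q ^ m * ν) * ∑ j ∈ Finset.range (m + 1), tW q μ ν m j := by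
          rw [Finset.mul_sum]
      _ = qPoch q ν (m + 1) := by rw [ih, qPoch_succ]; ring

/-- The q-deformed beta-binomial weights sum to one. -/
theorem qHahnPhi_sum_eq_one (q μ ν : ℝ) (hq0 : 0 < q) (hq1 : q < 1)
    (hμ : μ ≠ 0) (m : ℕ) (hν : qPoch q ν m ≠ 0) :
    ∑ j ∈ Finset.range (m + 1), qHahnPhi q μ ν j m = 1 := by
  have h : ∀ j, qHahnPhi q μ ν j m = tW q μ ν m j / qPoch q ν m := by
    intro j
    unfold qHahnPhi tW
    ring
  calc ∑ j ∈ Finset.range (m + 1), qHahnPhi q μ ν j m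
      = ∑ j ∈ Finset.range (m + 1), tW q μ ν m j / qPoch q ν m :=
        Finset.sum_congr rfl fun j _ => h j
    _ = (∑ j ∈ Finset.range (m + 1), tW q μ ν m j) / qPoch q ν m := by
        rw [Finset.sum_div]
    _ = 1 := by rw [tW_sum q μ ν hq0 hq1 hμ m, div_self hν]
end

section
/- If 0 < q < 1, 0 ≤ μ ≤ 1 and ν ≤ μ with ν ≥ 0, then for all 0 ≤ j ≤ m the q-deformed beta-binomial weight φ_{q,μ,ν}(j|m) is nonnegative. -/
open Finset

lemma qPoch_nonneg (q x : ℝ) (hq0 : 0 ≤ q) (hq1 : q ≤ 1) (hx0 : 0 ≤ x) (hx1 : x ≤ 1)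
    (k : ℕ) : 0 ≤ qPoch q x k := by
  apply Finset.prod_nonneg
  intro i _
  have h1 : q ^ i ≤ 1 := pow_le_one₀ hq0 hq1
  have : q ^ i * x ≤ 1 * 1 := mul_le_mul h1 hx1 hx0 zero_le_one
  linarith

/-- If `0 < q < 1`, `0 ≤ μ ≤ 1` and `0 ≤ ν ≤ μ`, the q-deformed beta-binomial weights
`φ_{q,μ,ν}(j|m)` are nonnegative for all `0 ≤ j ≤ m`. -/
theorem qHahnPhi_nonneg (q μ ν : ℝ) (hq0 : 0 < q) (hq1 : q < 1)
    (hμ0 : 0 ≤ μ) (hμ1 : μ ≤ 1) (hν0 : 0 ≤ ν) (hνμ : ν ≤ μ)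
    (j m : ℕ) (hjm : j ≤ m) :
    0 ≤ qHahnPhi q μ ν j m := by
  have hq0' := hq0.le
  have hq1' := hq1.le
  have hr0 : 0 ≤ ν / μ := div_nonneg hν0 hμ0
  have hr1 : ν / μ ≤ 1 := by
    rcases eq_or_lt_of_le hμ0 with h | h
    · simp [← h]
    · exact (div_le_one h).mpr hνμ
  have h1 := qPoch_nonneg q (ν / μ) hq0' hq1' hr0 hr1 j
  have h2 := qPoch_nonneg q μ hq0' hq1' hμ0 hμ1 (m - j)
  have h3 := qPoch_nonneg q ν hq0' hq1' hν0 (hνμ.trans hμ1) m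
  have h4 := qPoch_nonneg q q hq0' hq1' hq0' hq1' m
  have h5 := qPoch_nonneg q q hq0' hq1' hq0' hq1' j
  have h6 := qPoch_nonneg q q hq0' hq1' hq0' hq1' (m - j)
  have hp : 0 ≤ μ ^ j := pow_nonneg hμ0 j
  unfold qHahnPhi
  positivity
end

section
/- The q-deformed beta-binomial weights satisfy the symmetry property: for all nonnegative integers m and y, ∑_{j=0}^{m} q^{jy} φ_{q,μ,ν}(j|m) = ∑_{k=0}^{y} q^{km} φ_{q,μ,ν}(k|y). -/
open Finset

noncomputable def Bq (q : ℝ) (n k : ℕ) : ℝ :=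
  qPoch q q n / (qPoch q q k * qPoch q q (n - k))

noncomputable def Pf (q x : ℝ) (k : ℕ) : ℝ := ∏ i ∈ Finset.range k, (x - q ^ i)

noncomputable def SGN (q : ℝ) (k : ℕ) : ℝ := ∏ i ∈ Finset.range k, (-(q ^ i))

noncomputable def qnum (q μ ν : ℝ) (j m : ℕ) : ℝ :=
  Bq q m j * (μ ^ j * qPoch q (ν / μ) j * qPoch q μ (m - j))

noncomputable def Ck (q μ ν : ℝ) (k : ℕ) : ℝ :=
  SGN q k * μ ^ k * qPoch q (ν / μ) k * qPoch q q k / qPoch q ν k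

lemma qPoch_add (q x : ℝ) (a b : ℕ) :
    qPoch q x (a + b) = qPoch q x a * qPoch q (q ^ a * x) b := by
  unfold qPoch
  rw [Finset.prod_range_add]
  congr 1
  refine Finset.prod_congr rfl fun i _ => ?_
  rw [pow_add]; ring

lemma qq_pos (q : ℝ) (hq0 : 0 < q) (hq1 : q < 1) (n : ℕ) : 0 < qPoch q q n := by
  apply Finset.prod_pos
  intro i _
  have h1 : 0 < q ^ i := pow_pos hq0 i
  have h2 : q ^ i ≤ 1 := pow_le_one₀ hq0.le hq1.le
  nlinarith

lemma qq_ne (q : ℝ) (hq0 : 0 < q) (hq1 : q < 1) (n : ℕ) : qPoch q q n ≠ 0 :=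
  ne_of_gt (qq_pos q hq0 hq1 n)

lemma Bq_zero (q : ℝ) (hq0 : 0 < q) (hq1 : q < 1) (n : ℕ) : Bq q n 0 = 1 := by
  unfold Bq
  have h0 : qPoch q q 0 = 1 := by simp [qPoch]
  rw [Nat.sub_zero, h0, one_mul, div_self (qq_ne q hq0 hq1 n)]

lemma Bq_self (q : ℝ) (hq0 : 0 < q) (hq1 : q < 1) (n : ℕ) : Bq q n n = 1 := by
  unfold Bq
  have h0 : qPoch q q (n - n) = 1 := by simp [qPoch]
  rw [h0, mul_one, div_self (qq_ne q hq0 hq1 n)]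

lemma one_sub_ne (q : ℝ) (hq0 : 0 < q) (hq1 : q < 1) (a : ℕ) : (1 : ℝ) - q ^ a * q ≠ 0 := by
  have h := qq_pos q hq0 hq1 (a + 1)
  rw [qPoch_succ] at h
  have h2 := qq_pos q hq0 hq1 a
  intro hc
  rw [hc, mul_zero] at h
  exact lt_irrefl 0 h

lemma pascal1 (q : ℝ) (hq0 : 0 < q) (hq1 : q < 1) (a b : ℕ) :
    Bq q (a + b + 2) (a + 1) = q ^ (a + 1) * Bq q (a + b + 1) (a + 1) + Bq q (a + b + 1) a := by
  unfold Bq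
  have e1 : a + b + 2 - (a + 1) = b + 1 := by omega
  have e2 : a + b + 1 - (a + 1) = b := by omega
  have e3 : a + b + 1 - a = b + 1 := by omega
  rw [e1, e2, e3]
  rw [show a + b + 2 = (a + b + 1) + 1 from rfl, qPoch_succ q q (a + b + 1),
    qPoch_succ q q a, qPoch_succ q q b]
  have nA := qq_ne q hq0 hq1 (a + b + 1)
  have na := qq_ne q hq0 hq1 a
  have nb := qq_ne q hq0 hq1 b
  have nfa := one_sub_ne q hq0 hq1 a
  have nfb := one_sub_ne q hq0 hq1 b
  rw [mul_comm (q ^ a) q] at nfa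
  rw [mul_comm (q ^ b) q] at nfb
  field_simp
  ring

lemma pascal2 (q : ℝ) (hq0 : 0 < q) (hq1 : q < 1) (a b : ℕ) :
    Bq q (a + b + 2) (a + 1) = Bq q (a + b + 1) (a + 1) + q ^ (b + 1) * Bq q (a + b + 1) a := by
  unfold Bq
  have e1 : a + b + 2 - (a + 1) = b + 1 := by omega
  have e2 : a + b + 1 - (a + 1) = b := by omega
  have e3 : a + b + 1 - a = b + 1 := by omega
  rw [e1, e2, e3]
  rw [show a + b + 2 = (a + b + 1) + 1 from rfl, qPoch_succ q q (a + b + 1),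
    qPoch_succ q q a, qPoch_succ q q b]
  have nA := qq_ne q hq0 hq1 (a + b + 1)
  have na := qq_ne q hq0 hq1 a
  have nb := qq_ne q hq0 hq1 b
  have nfa := one_sub_ne q hq0 hq1 a
  have nfb := one_sub_ne q hq0 hq1 b
  rw [mul_comm (q ^ a) q] at nfa
  rw [mul_comm (q ^ b) q] at nfb
  field_simp
  ring

/-- Newton expansion at q-nodes. -/
lemma expand (q : ℝ) (hq0 : 0 < q) (hq1 : q < 1) (x : ℝ) (y : ℕ) :
    x ^ y = ∑ k ∈ Finset.range (y + 1), Bq q y k * Pf q x k := by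
  induction y with
  | zero => simp [Bq, Pf, qPoch]
  | succ y ih =>
    have step : ∀ k, x * Pf q x k = Pf q x (k + 1) + q ^ k * Pf q x k := by
      intro k
      have h : Pf q x (k + 1) = Pf q x k * (x - q ^ k) := prod_range_succ _ _
      rw [h]; ring
    have termwise : ∀ k ∈ Finset.range (y + 2),
        Bq q (y + 1) k * Pf q x k =
          (if k ≤ y then q ^ k * Bq q y k else 0) * Pf q x k +
          (if k = 0 then 0 else Bq q y (k - 1)) * Pf q x k := by
      intro k hk
      rw [Finset.mem_range] at hk
      rcases Nat.eq_zero_or_pos k with h0 | hpos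
      · subst h0
        simp [Bq_zero q hq0 hq1]
      · obtain ⟨a, rfl⟩ : ∃ a, k = a + 1 := ⟨k - 1, by omega⟩
        by_cases hky : a + 1 ≤ y
        · obtain ⟨b, hb⟩ : ∃ b, y = a + b + 1 := ⟨y - a - 1, by omega⟩
          subst hb
          rw [if_pos (by omega), if_neg (by omega)]
          rw [show a + b + 1 + 1 = a + b + 2 from rfl, pascal1 q hq0 hq1 a b]
          simp only [Nat.add_sub_cancel]
          ring
        · have ha : a = y := by omega
          subst ha
          rw [if_neg (by omega), if_neg (by omega)]
          simp only [Nat.add_sub_cancel]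
          rw [Bq_self q hq0 hq1, Bq_self q hq0 hq1]
          ring
    have hg1 : ∑ k ∈ Finset.range (y + 2),
          (if k ≤ y then q ^ k * Bq q y k else 0) * Pf q x k
        = ∑ k ∈ Finset.range (y + 1), q ^ k * Bq q y k * Pf q x k := by
      rw [Finset.sum_range_succ
        (fun k => (if k ≤ y then q ^ k * Bq q y k else 0) * Pf q x k) (y + 1)]
      rw [if_neg (by omega), zero_mul, add_zero]
      refine Finset.sum_congr rfl fun k hk => ?_
      rw [Finset.mem_range] at hk
      rw [if_pos (by omega)]
    have hg2 : ∑ k ∈ Finset.range (y + 2),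
          (if k = 0 then 0 else Bq q y (k - 1)) * Pf q x k
        = ∑ k ∈ Finset.range (y + 1), Bq q y k * Pf q x (k + 1) := by
      rw [Finset.sum_range_succ'
        (fun k => (if k = 0 then 0 else Bq q y (k - 1)) * Pf q x k) (y + 1)]
      simp
    calc x ^ (y + 1) = ∑ k ∈ Finset.range (y + 1), Bq q y k * (x * Pf q x k) := by
          rw [pow_succ, ih, Finset.sum_mul]
          exact Finset.sum_congr rfl fun k _ => by ring
      _ = ∑ k ∈ Finset.range (y + 1), (Bq q y k * Pf q x (k + 1)
            + q ^ k * Bq q y k * Pf q x k) := by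
          refine Finset.sum_congr rfl fun k _ => ?_
          rw [step k]; ring
      _ = (∑ k ∈ Finset.range (y + 1), Bq q y k * Pf q x (k + 1))
            + ∑ k ∈ Finset.range (y + 1), q ^ k * Bq q y k * Pf q x k := by
          rw [Finset.sum_add_distrib]
      _ = (∑ k ∈ Finset.range (y + 2), (if k = 0 then 0 else Bq q y (k - 1)) * Pf q x k)
            + ∑ k ∈ Finset.range (y + 2),
                (if k ≤ y then q ^ k * Bq q y k else 0) * Pf q x k := by
          rw [hg1, hg2]
      _ = ∑ k ∈ Finset.range (y + 2),
            ((if k ≤ y then q ^ k * Bq q y k else 0) * Pf q x k +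
              (if k = 0 then 0 else Bq q y (k - 1)) * Pf q x k) := by
          rw [Finset.sum_add_distrib]; ring
      _ = ∑ k ∈ Finset.range (y + 2), Bq q (y + 1) k * Pf q x k :=
          (Finset.sum_congr rfl termwise).symm

/-- q-Vandermonde sum. -/
lemma vander (q : ℝ) (hq0 : 0 < q) (hq1 : q < 1) (μ c : ℝ) (n : ℕ) :
    ∑ l ∈ Finset.range (n + 1), Bq q n l * (μ ^ l * qPoch q c l * qPoch q μ (n - l)) =
      qPoch q (c * μ) n := by
  induction n with
  | zero => simp [Bq, qPoch]
  | succ n ih =>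
    have termwise : ∀ l ∈ Finset.range (n + 2),
        Bq q (n + 1) l = (if l ≤ n then Bq q n l else 0)
          + (if l = 0 then 0 else q ^ (n + 1 - l) * Bq q n (l - 1)) := by
      intro l hl
      rw [Finset.mem_range] at hl
      rcases Nat.eq_zero_or_pos l with h0 | hpos
      · subst h0
        simp [Bq_zero q hq0 hq1]
      · obtain ⟨a, rfl⟩ : ∃ a, l = a + 1 := ⟨l - 1, by omega⟩
        by_cases hln : a + 1 ≤ n
        · obtain ⟨b, hb⟩ : ∃ b, n = a + b + 1 := ⟨n - a - 1, by omega⟩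
          subst hb
          rw [if_pos (by omega), if_neg (by omega)]
          rw [show a + b + 1 + 1 = a + b + 2 from rfl, pascal2 q hq0 hq1 a b]
          have e : a + b + 1 + 1 - (a + 1) = b + 1 := by omega
          rw [e]
          simp only [Nat.add_sub_cancel]
        · have ha : a = n := by omega
          subst ha
          rw [if_neg (by omega), if_neg (by omega)]
          simp only [Nat.add_sub_cancel, Nat.sub_self]
          rw [Bq_self q hq0 hq1, Bq_self q hq0 hq1]
          ring
    have split : ∑ l ∈ Finset.range (n + 2),
          Bq q (n + 1) l * (μ ^ l * qPoch q c l * qPoch q μ (n + 1 - l)) =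
        (∑ l ∈ Finset.range (n + 2),
          (if l ≤ n then Bq q n l else 0) * (μ ^ l * qPoch q c l * qPoch q μ (n + 1 - l)))
        + ∑ l ∈ Finset.range (n + 2),
          (if l = 0 then 0 else q ^ (n + 1 - l) * Bq q n (l - 1))
            * (μ ^ l * qPoch q c l * qPoch q μ (n + 1 - l)) := by
      rw [← Finset.sum_add_distrib]
      exact Finset.sum_congr rfl fun l hl => by rw [termwise l hl]; ring
    rw [split]
    have e1 : (∑ l ∈ Finset.range (n + 2),
          (if l ≤ n then Bq q n l else 0) * (μ ^ l * qPoch q c l * qPoch q μ (n + 1 - l)))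
        = ∑ l ∈ Finset.range (n + 1),
            Bq q n l * (μ ^ l * qPoch q c l * qPoch q μ (n - l)) * (1 - q ^ (n - l) * μ) := by
      rw [Finset.sum_range_succ
        (fun l => (if l ≤ n then Bq q n l else 0)
          * (μ ^ l * qPoch q c l * qPoch q μ (n + 1 - l))) (n + 1)]
      rw [if_neg (by omega), zero_mul, add_zero]
      refine Finset.sum_congr rfl fun l hl => ?_
      rw [Finset.mem_range] at hl
      rw [if_pos (by omega)]
      rw [show n + 1 - l = (n - l) + 1 by omega, qPoch_succ]
      ring
    have e2 : (∑ l ∈ Finset.range (n + 2),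
          (if l = 0 then 0 else q ^ (n + 1 - l) * Bq q n (l - 1))
            * (μ ^ l * qPoch q c l * qPoch q μ (n + 1 - l)))
        = ∑ l ∈ Finset.range (n + 1),
            Bq q n l * (μ ^ l * qPoch q c l * qPoch q μ (n - l))
              * (q ^ (n - l) * μ * (1 - q ^ l * c)) := by
      rw [Finset.sum_range_succ'
        (fun l => (if l = 0 then 0 else q ^ (n + 1 - l) * Bq q n (l - 1))
          * (μ ^ l * qPoch q c l * qPoch q μ (n + 1 - l))) (n + 1)]
      have hlast : (if (0:ℕ) = 0 then (0:ℝ) else q ^ (n + 1 - 0) * Bq q n (0 - 1))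
          * (μ ^ 0 * qPoch q c 0 * qPoch q μ (n + 1 - 0)) = 0 := by simp
      rw [hlast, add_zero]
      refine Finset.sum_congr rfl fun l hl => ?_
      rw [Finset.mem_range] at hl
      rw [if_neg (by omega)]
      rw [show l + 1 - 1 = l from rfl, show n + 1 - (l + 1) = n - l by omega,
        qPoch_succ q c l, pow_succ]
      ring
    rw [e1, e2, ← Finset.sum_add_distrib]
    have combine : ∀ l ∈ Finset.range (n + 1),
        Bq q n l * (μ ^ l * qPoch q c l * qPoch q μ (n - l)) * (1 - q ^ (n - l) * μ)
          + Bq q n l * (μ ^ l * qPoch q c l * qPoch q μ (n - l))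
              * (q ^ (n - l) * μ * (1 - q ^ l * c))
        = Bq q n l * (μ ^ l * qPoch q c l * qPoch q μ (n - l)) * (1 - q ^ n * (c * μ)) := by
      intro l hl
      rw [Finset.mem_range] at hl
      have hq : q ^ (n - l) * q ^ l = q ^ n := by
        rw [← pow_add]; congr 1; omega
      rw [← hq]; ring
    have hcsum := Finset.sum_congr rfl combine
    rw [hcsum, ← Finset.sum_mul, ih, qPoch_succ]

lemma Pf_zero_of_lt (q : ℝ) (j k : ℕ) (h : j < k) : Pf q (q ^ j) k = 0 := by
  apply Finset.prod_eq_zero (Finset.mem_range.mpr h)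
  simp

lemma Pf_shift (q : ℝ) (k l : ℕ) :
    Pf q (q ^ (k + l)) k = SGN q k * qPoch q (q ^ (l + 1)) k := by
  unfold Pf SGN qPoch
  calc ∏ i ∈ Finset.range k, (q ^ (k + l) - q ^ i)
      = ∏ i ∈ Finset.range k, ((-(q ^ i)) * (1 - q ^ (k - 1 - i) * q ^ (l + 1))) := by
        refine Finset.prod_congr rfl fun i hi => ?_
        rw [Finset.mem_range] at hi
        have h : q ^ i * (q ^ (k - 1 - i) * q ^ (l + 1)) = q ^ (k + l) := by
          rw [← pow_add, ← pow_add]; congr 1; omega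
        rw [← h]; ring
    _ = (∏ i ∈ Finset.range k, (-(q ^ i)))
          * ∏ i ∈ Finset.range k, (1 - q ^ (k - 1 - i) * q ^ (l + 1)) := by
        rw [Finset.prod_mul_distrib]
    _ = (∏ i ∈ Finset.range k, (-(q ^ i)))
          * ∏ i ∈ Finset.range k, (1 - q ^ i * q ^ (l + 1)) := by
        rw [Finset.prod_range_reflect (fun i => 1 - q ^ i * q ^ (l + 1)) k]

/-- The key moment identity. -/
lemma momk (q μ ν : ℝ) (hq0 : 0 < q) (hq1 : q < 1) (hμ : μ ≠ 0) (k m : ℕ) (hk : k ≤ m) :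
    ∑ j ∈ Finset.range (m + 1), qnum q μ ν j m * Pf q (q ^ j) k
      = SGN q k * μ ^ k * qPoch q (ν / μ) k * qPoch q (q ^ k * ν) (m - k)
          * (qPoch q q m / qPoch q q (m - k)) := by
  obtain ⟨n, rfl⟩ : ∃ n, m = k + n := ⟨m - k, by omega⟩
  have hmk : k + n - k = n := by omega
  rw [hmk]
  rw [show k + n + 1 = k + (n + 1) by omega, Finset.sum_range_add]
  have first0 : ∑ i ∈ Finset.range k, qnum q μ ν i (k + n) * Pf q (q ^ i) k = 0 := by
    apply Finset.sum_eq_zero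
    intro i hi
    rw [Finset.mem_range] at hi
    rw [Pf_zero_of_lt q i k hi, mul_zero]
  rw [first0, zero_add]
  have key : ∀ l ∈ Finset.range (n + 1),
      qnum q μ ν (k + l) (k + n) * Pf q (q ^ (k + l)) k
        = (SGN q k * μ ^ k * qPoch q (ν / μ) k * (qPoch q q (k + n) / qPoch q q n))
            * (Bq q n l * (μ ^ l * qPoch q (q ^ k * (ν / μ)) l * qPoch q μ (n - l))) := by
    intro l hl
    rw [Finset.mem_range] at hl
    rw [Pf_shift q k l]
    unfold qnum Bq
    rw [show k + n - (k + l) = n - l by omega]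
    have hpochsplit : qPoch q q (k + l) = qPoch q q l * qPoch q (q ^ (l + 1)) k := by
      rw [show k + l = l + k by omega, qPoch_add, pow_succ]
    have hX : qPoch q (q ^ (l + 1)) k ≠ 0 := by
      intro h
      apply qq_ne q hq0 hq1 (l + k)
      rw [show l + k = k + l by omega, hpochsplit, h, mul_zero]
    have hnm : qPoch q (ν / μ) (k + l) = qPoch q (ν / μ) k * qPoch q (q ^ k * (ν / μ)) l :=
      qPoch_add q _ k l
    rw [hpochsplit, hnm]
    have hl' := qq_ne q hq0 hq1 l
    have hnl := qq_ne q hq0 hq1 (n - l)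
    have hn := qq_ne q hq0 hq1 n
    field_simp
    ring
  have hsum := Finset.sum_congr rfl key
  rw [hsum, ← Finset.mul_sum, vander q hq0 hq1 μ (q ^ k * (ν / μ)) n]
  rw [show q ^ k * (ν / μ) * μ = q ^ k * ν by field_simp]
  ring

lemma phi_eq (q μ ν : ℝ) (j m : ℕ) :
    qHahnPhi q μ ν j m = qnum q μ ν j m / qPoch q ν m := by
  unfold qHahnPhi qnum Bq
  ring

/-- One side of the symmetry. -/
lemma side (q μ ν : ℝ) (hq0 : 0 < q) (hq1 : q < 1) (hμ : μ ≠ 0) (m y : ℕ)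
    (hνm : qPoch q ν m ≠ 0) :
    ∑ j ∈ Finset.range (m + 1), q ^ (j * y) * qHahnPhi q μ ν j m
      = ∑ k ∈ Finset.range (y + 1),
          (if k ≤ m then Bq q y k * Bq q m k * Ck q μ ν k else 0) := by
  have lhs1 : ∑ j ∈ Finset.range (m + 1), q ^ (j * y) * qHahnPhi q μ ν j m
      = ∑ j ∈ Finset.range (m + 1), ∑ k ∈ Finset.range (y + 1),
          Bq q y k * (qnum q μ ν j m * Pf q (q ^ j) k) / qPoch q ν m := by
    refine Finset.sum_congr rfl fun j _ => ?_
    rw [phi_eq, pow_mul, expand q hq0 hq1 (q ^ j) y, Finset.sum_mul]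
    refine Finset.sum_congr rfl fun k _ => ?_
    ring
  rw [lhs1, Finset.sum_comm]
  refine Finset.sum_congr rfl fun k hk => ?_
  rw [Finset.mem_range] at hk
  by_cases hkm : k ≤ m
  · rw [if_pos hkm]
    have hstep : ∑ j ∈ Finset.range (m + 1),
          Bq q y k * (qnum q μ ν j m * Pf q (q ^ j) k) / qPoch q ν m
        = Bq q y k * (∑ j ∈ Finset.range (m + 1), qnum q μ ν j m * Pf q (q ^ j) k)
            / qPoch q ν m := by
      rw [Finset.mul_sum, Finset.sum_div]
    rw [hstep, momk q μ ν hq0 hq1 hμ k m hkm]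
    have hsplitν : qPoch q ν m = qPoch q ν k * qPoch q (q ^ k * ν) (m - k) := by
      calc qPoch q ν m = qPoch q ν (k + (m - k)) := by rw [show k + (m - k) = m by omega]
        _ = qPoch q ν k * qPoch q (q ^ k * ν) (m - k) := qPoch_add q ν k (m - k)
    have hν1 : qPoch q ν k ≠ 0 := by
      intro h; apply hνm; rw [hsplitν, h, zero_mul]
    have hν2 : qPoch q (q ^ k * ν) (m - k) ≠ 0 := by
      intro h; apply hνm; rw [hsplitν, h, mul_zero]
    unfold Bq Ck
    have h1 := qq_ne q hq0 hq1 k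
    have h2 := qq_ne q hq0 hq1 (m - k)
    have h3 := qq_ne q hq0 hq1 m
    have h4 := qq_ne q hq0 hq1 y
    have h5 := qq_ne q hq0 hq1 (y - k)
    rw [hsplitν]
    have hν2' : qPoch q (ν * q ^ k) (m - k) ≠ 0 := by rwa [mul_comm]
    field_simp
  · rw [if_neg hkm]
    apply Finset.sum_eq_zero
    intro j hj
    rw [Finset.mem_range] at hj
    rw [Pf_zero_of_lt q j k (by omega), mul_zero, mul_zero, zero_div]

/-- Symmetry property of the q-deformed beta-binomial weights:
`∑_{j=0}^{m} q^{jy} φ_{q,μ,ν}(j|m) = ∑_{k=0}^{y} q^{km} φ_{q,μ,ν}(k|y)`. -/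
theorem qHahnPhi_symmetry (q μ ν : ℝ) (hq0 : 0 < q) (hq1 : q < 1) (hμ : μ ≠ 0)
    (m y : ℕ) (hνm : qPoch q ν m ≠ 0) (hνy : qPoch q ν y ≠ 0) :
    ∑ j ∈ Finset.range (m + 1), q ^ (j * y) * qHahnPhi q μ ν j m =
      ∑ k ∈ Finset.range (y + 1), q ^ (k * m) * qHahnPhi q μ ν k y := by
  rw [side q μ ν hq0 hq1 hμ m y hνm, side q μ ν hq0 hq1 hμ y m hνy]
  have ext : ∀ a b : ℕ, ∑ k ∈ Finset.range (b + 1),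
        (if k ≤ a then Bq q b k * Bq q a k * Ck q μ ν k else 0)
      = ∑ k ∈ Finset.range (a + b + 1),
          (if k ≤ a ∧ k ≤ b then Bq q b k * Bq q a k * Ck q μ ν k else 0) := by
    intro a b
    have step1 : ∑ k ∈ Finset.range (b + 1),
          (if k ≤ a then Bq q b k * Bq q a k * Ck q μ ν k else 0)
        = ∑ k ∈ Finset.range (b + 1),
          (if k ≤ a ∧ k ≤ b then Bq q b k * Bq q a k * Ck q μ ν k else 0) := by
      refine Finset.sum_congr rfl fun k hk => ?_
      rw [Finset.mem_range] at hk
      by_cases h : k ≤ a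
      · rw [if_pos h, if_pos ⟨h, by omega⟩]
      · rw [if_neg h, if_neg (fun hh => h hh.1)]
    rw [step1]
    refine Finset.sum_subset (Finset.range_subset_range.mpr (by omega : b + 1 ≤ a + b + 1)) ?_
    intro k _ hk2
    rw [Finset.mem_range, not_lt] at hk2
    rw [if_neg (by omega)]
  rw [ext m y, ext y m]
  rw [show y + m + 1 = m + y + 1 by omega]
  refine Finset.sum_congr rfl fun k _ => ?_
  by_cases h : k ≤ m ∧ k ≤ y
  · rw [if_pos h, if_pos ⟨h.2, h.1⟩]; ring
  · rw [if_neg h, if_neg (fun hh => h ⟨hh.2, hh.1⟩)]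
end

section
/- As ε → 0+, for 1 ≤ j ≤ m, the weight φ_{q,ν+ε,ν}(j|m) has the expansion φ_{q,ν+ε,ν}(j|m) = ψ_{q,ν}(j|m)·ε + O(ε²), where ψ_{q,ν}(j|m) = ν^{j-1}/(1-q^j) · (q;q)_m (ν;q)_{m-j} / ((q;q)_{m-j} (ν;q)_m); and φ_{q,ν+ε,ν}(0|m) = 1 + O(ε). -/
open Finset Filter Asymptotics

/-- The rate `ψ_{q,ν}(j|m) = ν^{j-1}/(1-q^j) · (q;q)_m (ν;q)_{m-j}/((q;q)_{m-j}(ν;q)_m)`. -/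
noncomputable def qHahnPsi (q ν : ℝ) (j m : ℕ) : ℝ :=
  ν ^ (j - 1) / (1 - q ^ j) * (qPoch q q m * qPoch q ν (m - j)) /
    (qPoch q q (m - j) * qPoch q ν m)

lemma qPoch_pos {q x : ℝ} (hq0 : 0 ≤ q) (hq1 : q ≤ 1) (hx0 : 0 ≤ x) (hx1 : x < 1)
    (k : ℕ) : 0 < qPoch q x k := by
  apply Finset.prod_pos
  intro i _
  have h1 : q ^ i * x ≤ x := by
    have := pow_le_one₀ hq0 hq1 (n := i)
    nlinarith
  linarith

/-- As `ε → 0+`: `φ_{q,ν+ε,ν}(j|m) = ψ_{q,ν}(j|m)·ε + O(ε²)` for `1 ≤ j ≤ m`, and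
`φ_{q,ν+ε,ν}(0|m) = 1 + O(ε)`. -/
theorem qHahnPhi_expansion_mu_near_nu (q ν : ℝ) (hq0 : 0 < q) (hq1 : q < 1)
    (hν0 : 0 ≤ ν) (hν1 : ν < 1) (m : ℕ) (hm : 1 ≤ m) :
    (∀ j : ℕ, 1 ≤ j → j ≤ m →
      (fun ε : ℝ => qHahnPhi q (ν + ε) ν j m - qHahnPsi q ν j m * ε)
        =O[nhdsWithin 0 (Set.Ioi 0)] fun ε : ℝ => ε ^ 2) ∧
    ((fun ε : ℝ => qHahnPhi q (ν + ε) ν 0 m - 1)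
        =O[nhdsWithin 0 (Set.Ioi 0)] fun ε : ℝ => ε) := by
  have hqm_pos : ∀ k : ℕ, 0 < qPoch q q k := fun k =>
    qPoch_pos hq0.le hq1.le hq0.le hq1 k
  have hνm_pos : ∀ k : ℕ, 0 < qPoch q ν k := fun k =>
    qPoch_pos hq0.le hq1.le hν0 hν1 k
  constructor
  · intro j hj hjm
    set C : ℝ := qPoch q q m / (qPoch q q j * qPoch q q (m - j)) with hC
    set G : ℝ → ℝ := fun ε =>
      (∏ i ∈ Finset.Ico 1 j, (ε + ν * (1 - q ^ i))) *
        (∏ i ∈ Finset.range (m - j), (1 - q ^ i * (ν + ε))) / qPoch q ν m * C with hGdef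
    -- differentiability of G at 0
    have hGdiff : DifferentiableAt ℝ G 0 := by
      apply DifferentiableAt.mul_const
      apply DifferentiableAt.div_const
      apply DifferentiableAt.mul
      · exact DifferentiableAt.fun_finsetProd fun i _ => by fun_prop
      · exact DifferentiableAt.fun_finsetProd fun i _ => by fun_prop
    -- key identity on ε > 0
    have hEq : ∀ ε : ℝ, 0 < ε → qHahnPhi q (ν + ε) ν j m = ε * G ε := by
      intro ε hε
      have hμ : ν + ε ≠ 0 := by positivity
      have key : (ν + ε) ^ j * qPoch q (ν / (ν + ε)) j =
          ∏ i ∈ Finset.range j, (ε + ν * (1 - q ^ i)) := by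
        have hpw : (ν + ε) ^ j = ∏ _i ∈ Finset.range j, (ν + ε) := by
          rw [Finset.prod_const, Finset.card_range]
        rw [qPoch, hpw, ← Finset.prod_mul_distrib]
        refine Finset.prod_congr rfl fun i _ => ?_
        field_simp [hμ]
        ring
      have split : (∏ i ∈ Finset.range j, (ε + ν * (1 - q ^ i))) =
          ε * ∏ i ∈ Finset.Ico 1 j, (ε + ν * (1 - q ^ i)) := by
        rw [Finset.range_eq_Ico, Finset.prod_eq_prod_Ico_succ_bot hj]
        simp
      have hGε : G ε = (∏ i ∈ Finset.Ico 1 j, (ε + ν * (1 - q ^ i))) *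
          qPoch q (ν + ε) (m - j) / qPoch q ν m * C := rfl
      rw [qHahnPhi, hGε, ← hC]
      rw [show (ν + ε) ^ j * (qPoch q (ν / (ν + ε)) j * qPoch q (ν + ε) (m - j)) =
          ((ν + ε) ^ j * qPoch q (ν / (ν + ε)) j) * qPoch q (ν + ε) (m - j) by ring,
        key, split]
      ring
    -- value of G at 0
    have hG0 : G 0 = qHahnPsi q ν j m := by
      have hP : (∏ i ∈ Finset.Ico 1 j, (ν * (1 - q ^ i))) =
          ν ^ (j - 1) * ∏ i ∈ Finset.Ico 1 j, (1 - q ^ i) := by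
        rw [Finset.prod_mul_distrib, Finset.prod_const, Nat.card_Ico]
      have hqqj : qPoch q q j = (∏ i ∈ Finset.Ico 1 j, (1 - q ^ i)) * (1 - q ^ j) := by
        have h1 : qPoch q q j = ∏ i ∈ Finset.range j, (1 - q ^ (1 + i)) := by
          rw [qPoch]
          exact Finset.prod_congr rfl fun i _ => by rw [Nat.add_comm 1 i, pow_succ]
        have h2 : (∏ i ∈ Finset.Ico 1 (j + 1), (1 - q ^ i)) =
            ∏ i ∈ Finset.range j, (1 - q ^ (1 + i)) := by
          rw [Finset.prod_Ico_eq_prod_range]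
          simp
        rw [h1, ← h2, Finset.prod_Ico_succ_top hj]
      have hPpos : 0 < ∏ i ∈ Finset.Ico 1 j, (1 - q ^ i) := by
        apply Finset.prod_pos
        intro i hi
        have h1i : 1 ≤ i := (Finset.mem_Ico.mp hi).1
        have hle : q ^ i ≤ q ^ 1 := pow_le_pow_of_le_one hq0.le hq1.le h1i
        rw [pow_one] at hle
        linarith
      have hqj : (1 : ℝ) - q ^ j ≠ 0 := by
        have : q ^ j < 1 := pow_lt_one₀ hq0.le hq1 (by omega)
        linarith
      have hG0e : G 0 = (∏ i ∈ Finset.Ico 1 j, (ν * (1 - q ^ i))) *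
          qPoch q ν (m - j) / qPoch q ν m * C := by
        show (∏ i ∈ Finset.Ico 1 j, ((0:ℝ) + ν * (1 - q ^ i))) *
          (∏ i ∈ Finset.range (m - j), (1 - q ^ i * (ν + 0))) / qPoch q ν m * C = _
        simp only [zero_add, add_zero]
        rfl
      rw [hG0e, hP, hC, hqqj, qHahnPsi]
      field_simp [hPpos.ne', hqj, (hνm_pos m).ne', (hqm_pos (m - j)).ne']
    -- conclude
    have h1 : (fun ε : ℝ => G ε - G 0) =O[nhdsWithin 0 (Set.Ioi 0)] fun ε : ℝ => ε := by
      have := hGdiff.isBigO_sub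
      simp only [sub_zero] at this
      exact this.mono nhdsWithin_le_nhds
    have h2 : (fun ε : ℝ => ε * (G ε - G 0)) =O[nhdsWithin 0 (Set.Ioi 0)]
        fun ε : ℝ => ε ^ 2 := by
      have := (isBigO_refl (fun ε : ℝ => ε) (nhdsWithin 0 (Set.Ioi 0))).mul h1
      simpa [sq] using this
    refine Filter.EventuallyEq.trans_isBigO ?_ h2
    filter_upwards [self_mem_nhdsWithin] with ε hε
    rw [hEq ε hε, hG0]
    ring
  · -- j = 0 case
    have hφ : ∀ ε : ℝ, qHahnPhi q (ν + ε) ν 0 m = qPoch q (ν + ε) m / qPoch q ν m := by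
      intro ε
      have h0 : qPoch q (ν / (ν + ε)) 0 = 1 := by simp [qPoch]
      have h0' : qPoch q q 0 = 1 := by simp [qPoch]
      rw [qHahnPhi, h0, h0']
      simp [div_self (hqm_pos m).ne']
    have hH : DifferentiableAt ℝ (fun ε : ℝ => qPoch q (ν + ε) m / qPoch q ν m) 0 := by
      apply DifferentiableAt.div_const
      exact DifferentiableAt.fun_finsetProd fun i _ => by fun_prop
    have hH0 : qPoch q (ν + 0) m / qPoch q ν m = 1 := by
      rw [add_zero, div_self (hνm_pos m).ne']
    have := hH.isBigO_sub
    simp only [sub_zero, hH0] at this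
    refine Filter.EventuallyEq.trans_isBigO ?_ (this.mono nhdsWithin_le_nhds)
    filter_upwards with ε
    rw [hφ ε]
end

section
/- As ε → 0+, for 0 ≤ j ≤ m-1, the weight φ_{q,1-ε,ν(1-ε)}(j|m) has the expansion φ_{q,1-ε,ν(1-ε)}(j|m) = ψ•_{q,ν}(j|m)·ε + O(ε²), where ψ•_{q,ν}(j|m) = 1/(1-q^{m-j}) · (q;q)_m (ν;q)_j / ((q;q)_j (ν;q)_m); and φ_{q,1-ε,ν(1-ε)}(m|m) = 1 + O(ε). -/
open Finset Filter Asymptotics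

/-- The rate `ψ•_{q,ν}(j|m) = 1/(1-q^{m-j}) · (q;q)_m (ν;q)_j/((q;q)_j (ν;q)_m)`. -/
noncomputable def qHahnPsiDot (q ν : ℝ) (j m : ℕ) : ℝ :=
  1 / (1 - q ^ (m - j)) * (qPoch q q m * qPoch q ν j) / (qPoch q q j * qPoch q ν m)

/-- As `ε → 0+`: `φ_{q,1-ε,ν(1-ε)}(j|m) = ψ•_{q,ν}(j|m)·ε + O(ε²)` for `0 ≤ j ≤ m-1`, and
`φ_{q,1-ε,ν(1-ε)}(m|m) = 1 + O(ε)`. -/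
theorem qHahnPhi_expansion_mu_near_one (q ν : ℝ) (hq0 : 0 < q) (hq1 : q < 1)
    (hν0 : 0 ≤ ν) (hν1 : ν < 1) (m : ℕ) :
    (∀ j : ℕ, j ≤ m - 1 → j < m →
      (fun ε : ℝ => qHahnPhi q (1 - ε) (ν * (1 - ε)) j m - qHahnPsiDot q ν j m * ε)
        =O[nhdsWithin 0 (Set.Ioi 0)] fun ε : ℝ => ε ^ 2) ∧
    ((fun ε : ℝ => qHahnPhi q (1 - ε) (ν * (1 - ε)) m m - 1)
        =O[nhdsWithin 0 (Set.Ioi 0)] fun ε : ℝ => ε) := by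
  have hqq0 : (0:ℝ) ≤ q := hq0.le
  have hqq1 : q ≤ 1 := hq1.le
  have hνm : ∀ n : ℕ, qPoch q ν n ≠ 0 := fun n => (qPoch_pos hqq0 hqq1 hν0 hν1 n).ne'
  have hqm : ∀ n : ℕ, qPoch q q n ≠ 0 := fun n => (qPoch_pos hqq0 hqq1 hqq0 hq1 n).ne'
  have hDd : Differentiable ℝ (fun ε : ℝ => qPoch q (ν * (1 - ε)) m) := by
    unfold qPoch
    apply Differentiable.fun_finsetProd
    intro i _
    fun_prop
  have hD0 : qPoch q (ν * (1 - (0:ℝ))) m = qPoch q ν m := by norm_num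
  have hev1 : ∀ᶠ ε : ℝ in nhdsWithin 0 (Set.Ioi 0), ε < 1 :=
    (eventually_lt_nhds (by norm_num : (0:ℝ) < 1)).filter_mono nhdsWithin_le_nhds
  constructor
  · intro j _ hj
    set C := qPoch q q m / (qPoch q q j * qPoch q q (m - j)) with hC
    set ψ := qHahnPsiDot q ν j m with hψ
    set h : ℝ → ℝ := fun ε =>
      (1 - ε) ^ j * (qPoch q ν j * ∏ i ∈ Finset.range (m - j - 1), (1 - q ^ (i+1) * (1 - ε)))
        / qPoch q (ν * (1 - ε)) m * C - ψ with hh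
    have hprod0 : (∏ i ∈ Finset.range (m - j - 1), (1 - q ^ (i+1) * (1 - (0:ℝ))))
        = qPoch q q (m - j - 1) := by
      unfold qPoch
      apply Finset.prod_congr rfl
      intro i _
      rw [pow_succ]
      ring
    have hsplit : qPoch q q (m - j) = qPoch q q (m - j - 1) * (1 - q ^ (m - j)) := by
      unfold qPoch
      rw [show m - j = (m - j - 1) + 1 by omega, Finset.prod_range_succ]
      rw [← pow_succ, show (m - j - 1) + 1 = m - j by omega]
    have hqk : (1:ℝ) - q ^ (m - j) ≠ 0 := by
      have : q ^ (m - j) < 1 := pow_lt_one₀ hqq0 hq1 (by omega)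
      linarith
    have h0 : h 0 = 0 := by
      simp only [hh, hC, hψ, qHahnPsiDot]
      norm_num [hprod0, hD0]
      rw [hsplit, sub_eq_zero]
      have e1 : qPoch q q (m - j - 1) ≠ 0 := hqm _
      have e2 : qPoch q ν m ≠ 0 := hνm m
      have e3 : qPoch q q j ≠ 0 := hqm j
      field_simp
      rw [show (∏ x ∈ Finset.range (m - j - 1), (1 - q ^ (x + 1))) = qPoch q q (m - j - 1)
        from by simpa using hprod0]
      ring
    have hd : DifferentiableAt ℝ h 0 := by
      apply DifferentiableAt.sub_const
      apply DifferentiableAt.mul_const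
      refine DifferentiableAt.div ?_ (hDd 0) ?_
      · have hp : Differentiable ℝ
            (fun x : ℝ => ∏ i ∈ Finset.range (m - j - 1), (1 - q ^ (i+1) * (1 - x))) :=
          Differentiable.fun_finsetProd fun i _ => by fun_prop
        exact ((((differentiable_const (1:ℝ)).sub differentiable_id).pow j) 0).mul
          (((differentiable_const (qPoch q ν j)).mul hp) 0)
      · rw [hD0]; exact hνm m
    have hhO : h =O[nhds 0] (fun x : ℝ => x) := by
      simpa [h0] using hd.isBigO_sub
    have hO2 : (fun ε : ℝ => ε * h ε) =O[nhds 0] (fun ε : ℝ => ε ^ 2) := by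
      have := (isBigO_refl (fun x : ℝ => x) (nhds 0)).mul hhO
      simpa [sq] using this
    have hev : ∀ᶠ ε : ℝ in nhdsWithin 0 (Set.Ioi 0),
        ε * h ε = qHahnPhi q (1 - ε) (ν * (1 - ε)) j m - ψ * ε := by
      filter_upwards [hev1] with ε hε
      have hμ : (1:ℝ) - ε ≠ 0 := by linarith
      have hfac : qPoch q (1 - ε) (m - j)
          = (∏ i ∈ Finset.range (m - j - 1), (1 - q ^ (i+1) * (1 - ε))) * ε := by
        unfold qPoch
        rw [show m - j = (m - j - 1) + 1 by omega, Finset.prod_range_succ']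
        norm_num
      simp only [hh, qHahnPhi, mul_div_cancel_right₀ ν hμ, hfac]
      ring
    exact (hO2.mono nhdsWithin_le_nhds).congr' hev EventuallyEq.rfl
  · set g : ℝ → ℝ := fun ε => (1 - ε) ^ m * qPoch q ν m / qPoch q (ν * (1 - ε)) m - 1
      with hg
    have h0 : g 0 = 0 := by
      simp only [hg]
      rw [hD0]
      norm_num [div_self (hνm m)]
    have hd : DifferentiableAt ℝ g 0 := by
      apply DifferentiableAt.sub_const
      refine DifferentiableAt.div ?_ (hDd 0) ?_
      · fun_prop
      · rw [hD0]; exact hνm m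
    have hgO : g =O[nhds 0] (fun x : ℝ => x) := by
      simpa [h0] using hd.isBigO_sub
    have hev : ∀ᶠ ε : ℝ in nhdsWithin 0 (Set.Ioi 0),
        g ε = qHahnPhi q (1 - ε) (ν * (1 - ε)) m m - 1 := by
      filter_upwards [hev1] with ε hε
      have hμ : (1:ℝ) - ε ≠ 0 := by linarith
      simp only [hg, qHahnPhi, mul_div_cancel_right₀ ν hμ, Nat.sub_self]
      rw [show qPoch q (1 - ε) 0 = 1 by simp [qPoch],
        show qPoch q q 0 = 1 by simp [qPoch], mul_one, mul_one,
        div_self (hqm m), mul_one]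
    exact (hgO.mono nhdsWithin_le_nhds).congr' hev EventuallyEq.rfl
end

section
/- Let B_ε ~ Beta(εα, εβ) for α, β > 0. Then as ε → 0+, the pair (−ε log B_ε, −ε log(1−B_ε)) converges in distribution to (ξ E_α, (1−ξ) E_β), where ξ is Bernoulli with P(ξ=1) = β/(α+β), and E_α, E_β are exponential random variables with rates α and β respectively, independent of ξ. -/
open MeasureTheory ProbabilityTheory Filter

/-- The beta distribution `Beta(a,b)` on `[0,1]`, with density
`Γ(a+b)/(Γ(a)Γ(b)) x^{a-1}(1-x)^{b-1}`. -/
noncomputable def betaMeasure (a b : ℝ) : Measure ℝ :=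
  volume.withDensity fun x =>
    ENNReal.ofReal
      (if x ∈ Set.Ioo (0 : ℝ) 1 then
        Real.Gamma (a + b) / (Real.Gamma a * Real.Gamma b) * x ^ (a - 1) * (1 - x) ^ (b - 1)
      else 0)

open Real Set Topology
open scoped ENNReal NNReal

lemma aux_rpow_le_two {t p : ℝ} (h1 : 1/2 ≤ t) (h2 : t ≤ 1) (hp : -1 ≤ p) : t ^ p ≤ 2 := by
  rcases le_or_gt 0 p with hp0 | hp0
  · exact (Real.rpow_le_one (by linarith) h2 hp0).trans one_le_two
  · calc t ^ p ≤ (1/2 : ℝ) ^ p := Real.rpow_le_rpow_of_nonpos (by norm_num) h1 hp0.le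
    _ = 2 ^ (-p) := by
        rw [one_div, ← Real.rpow_neg_one (2:ℝ), ← Real.rpow_mul (by norm_num)]
        ring_nf
    _ ≤ 2 ^ (1:ℝ) := Real.rpow_le_rpow_of_exponent_le one_le_two (by linarith)
    _ = 2 := Real.rpow_one 2

lemma aux_image {ε : ℝ} (hε : 0 < ε) :
    (fun u : ℝ => Real.exp (-(u/ε))) '' Ioi (ε * Real.log 2) = Ioo (0:ℝ) (1/2) := by
  ext x
  constructor
  · rintro ⟨u, hu, rfl⟩
    refine ⟨Real.exp_pos _, ?_⟩
    have h2 : Real.log 2 < u / ε := by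
      rw [lt_div_iff₀ hε]; rw [mem_Ioi] at hu; linarith [hu]
    calc (fun u => rexp (-(u / ε))) u = Real.exp (-(u/ε)) := rfl
      _ < Real.exp (-(Real.log 2)) := Real.exp_lt_exp.2 (by linarith)
      _ = 1/2 := by rw [Real.exp_neg, Real.exp_log (by norm_num), one_div]
  · rintro ⟨hx0, hx2⟩
    refine ⟨-(ε * Real.log x), ?_, ?_⟩
    · have hlog : Real.log x < Real.log (1/2) := Real.log_lt_log hx0 hx2
      rw [Real.log_div one_ne_zero (by norm_num), Real.log_one] at hlog
      rw [mem_Ioi]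
      nlinarith [hlog]
    · show Real.exp (-(-(ε * Real.log x) / ε)) = x
      rw [neg_div, neg_neg, mul_comm ε, mul_div_assoc, div_self hε.ne', mul_one,
        Real.exp_log hx0]

lemma key (a b : ℝ) (ha : 0 < a) (hb : 0 < b) (F : BoundedContinuousFunction (ℝ × ℝ) ℝ) :
    Tendsto (fun ε : ℝ => ε * ∫ x in Ioo (0:ℝ) (1/2),
        x ^ (ε*a-1) * (1-x) ^ (ε*b-1) * F (-ε * Real.log x, -ε * Real.log (1-x)))
      (nhdsWithin 0 (Ioi 0))
      (𝓝 (∫ u in Ioi (0:ℝ), Real.exp (-(a*u)) * F (u, 0))) := by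
  set h : ℝ → ℝ → ℝ := fun ε u =>
    Real.exp (-(a*u)) * (1 - Real.exp (-(u/ε))) ^ (ε*b-1) *
      F (u, -ε * Real.log (1 - Real.exp (-(u/ε)))) with hh
  have heq : ∀ᶠ ε in 𝓝[>](0:ℝ),
      ε * ∫ x in Ioo (0:ℝ) (1/2),
        x ^ (ε*a-1) * (1-x) ^ (ε*b-1) * F (-ε * Real.log x, -ε * Real.log (1-x))
      = ∫ u, (Ioi (ε * Real.log 2)).indicator (h ε) u := by
    filter_upwards [self_mem_nhdsWithin] with ε (hε : ε ∈ Ioi 0)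
    rw [mem_Ioi] at hε
    have hd : ∀ u ∈ Ioi (ε * Real.log 2), HasDerivWithinAt (fun u => Real.exp (-(u/ε)))
        (Real.exp (-(u/ε)) * (-(1/ε))) (Ioi (ε * Real.log 2)) u := by
      intro u _
      have : HasDerivAt (fun u : ℝ => -(u/ε)) (-(1/ε)) u := by
        exact ((hasDerivAt_id u).div_const ε).neg
      exact this.exp.hasDerivWithinAt
    have hinj : InjOn (fun u : ℝ => Real.exp (-(u/ε))) (Ioi (ε * Real.log 2)) := by
      intro x _ y _ hxy
      have h2 : -(x/ε) = -(y/ε) := Real.exp_injective hxy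
      have h3 : x / ε = y / ε := neg_injective h2
      have h4 := congrArg (· * ε) h3
      simpa [div_mul_cancel₀, hε.ne'] using h4
    have hsub := integral_image_eq_integral_abs_deriv_smul measurableSet_Ioi hd hinj
      (fun x => x ^ (ε*a-1) * (1-x) ^ (ε*b-1) * F (-ε * Real.log x, -ε * Real.log (1-x)))
    rw [← aux_image hε, hsub, ← integral_const_mul, integral_indicator measurableSet_Ioi]
    refine setIntegral_congr_fun measurableSet_Ioi fun u hu => ?_
    have hexp : (0:ℝ) < Real.exp (-(u/ε)) := Real.exp_pos _
    rw [smul_eq_mul, abs_mul, abs_of_pos hexp, abs_neg, abs_of_pos (by positivity : (0:ℝ) < 1/ε),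
      Real.log_exp, ← Real.exp_mul]
    have h1 : -ε * -(u/ε) = u := by field_simp
    rw [h1, hh]
    beta_reduce
    have he : Real.exp (-(u/ε)) * Real.exp (-(u/ε) * (ε*a-1)) = Real.exp (-(a*u)) := by
      rw [← Real.exp_add]; congr 1; field_simp; ring
    rw [← he]
    field_simp
  have hlim : Tendsto (fun ε => ∫ u, (Ioi (ε * Real.log 2)).indicator (h ε) u)
      (𝓝[>](0:ℝ)) (𝓝 (∫ u, (Ioi (0:ℝ)).indicator (fun u => Real.exp (-(a*u)) * F (u,0)) u)) := by
    apply tendsto_integral_filter_of_dominated_convergence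
        ((Ioi (0:ℝ)).indicator (fun u => Real.exp (-(a*u)) * (2 * ‖F‖)))
    · filter_upwards [self_mem_nhdsWithin] with ε (hε : ε ∈ Ioi 0)
      have m1 : Measurable fun u : ℝ => Real.exp (-(u/ε)) := (measurable_id.div_const ε).neg.exp
      refine (Measurable.indicator ?_ measurableSet_Ioi).aestronglyMeasurable
      exact (((measurable_id.const_mul a).neg.exp.mul
        (by fun_prop : Measurable fun u : ℝ => (1 - Real.exp (-(u/ε))) ^ (ε*b-1))).mul
        (F.continuous.measurable.comp (measurable_id.prodMk
          (((measurable_const.sub m1).log).const_mul (-ε)))))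
    · filter_upwards [self_mem_nhdsWithin] with ε (hε : ε ∈ Ioi 0)
      rw [mem_Ioi] at hε
      refine Filter.Eventually.of_forall fun u => ?_
      by_cases hu : u ∈ Ioi (ε * Real.log 2)
      · have hu0 : u ∈ Ioi (0:ℝ) := by
          have : 0 < ε * Real.log 2 := mul_pos hε (Real.log_pos one_lt_two)
          rw [mem_Ioi] at hu ⊢; linarith
        rw [indicator_of_mem hu, indicator_of_mem hu0]
        have ht2 : Real.exp (-(u/ε)) ≤ 1/2 := by
          rw [mem_Ioi] at hu
          have h2 : Real.log 2 < u / ε := by rw [lt_div_iff₀ hε]; linarith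
          calc Real.exp (-(u/ε)) ≤ Real.exp (-(Real.log 2)) := Real.exp_le_exp.2 (by linarith)
            _ = 1/2 := by rw [Real.exp_neg, Real.exp_log (by norm_num), one_div]
        have ht1 : 1/2 ≤ 1 - Real.exp (-(u/ε)) := by linarith
        have ht3 : 1 - Real.exp (-(u/ε)) ≤ 1 := by linarith [Real.exp_pos (-(u/ε))]
        have hB : (1 - Real.exp (-(u/ε))) ^ (ε*b-1) ≤ 2 :=
          aux_rpow_le_two ht1 ht3 (by nlinarith)
        rw [hh]
        simp only [norm_mul]
        rw [Real.norm_eq_abs (Real.exp _), Real.norm_eq_abs ((1 - Real.exp (-(u/ε))) ^ (ε*b-1)),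
          abs_of_pos (Real.exp_pos _), abs_of_nonneg (Real.rpow_nonneg (by linarith) _),
          ← mul_assoc]
        exact mul_le_mul (mul_le_mul le_rfl hB (Real.rpow_nonneg (by linarith) _)
            (Real.exp_pos _).le)
          (F.norm_coe_le_norm _) (norm_nonneg _) (by positivity)
      · rw [indicator_of_notMem hu, norm_zero]
        exact Set.indicator_nonneg (fun x _ => by positivity) u
    · rw [integrable_indicator_iff measurableSet_Ioi]
      simpa [neg_mul, IntegrableOn] using ((exp_neg_integrableOn_Ioi 0 ha).mul_const (2 * ‖F‖))
    · have h0 : ∀ᵐ u : ℝ, u ≠ 0 := by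
        refine ae_iff.2 ?_
        simp only [ne_eq, not_not, setOf_eq_eq_singleton]
        exact measure_singleton 0
      filter_upwards [h0] with u hu0
      rcases lt_trichotomy u 0 with hu | hu | hu
      · have hz : ∀ᶠ ε in 𝓝[>](0:ℝ), (0:ℝ) = (Ioi (ε * Real.log 2)).indicator (h ε) u := by
          filter_upwards [self_mem_nhdsWithin] with ε (hε : ε ∈ Ioi 0)
          rw [mem_Ioi] at hε
          rw [indicator_of_notMem]
          rw [mem_Ioi, not_lt]
          nlinarith [Real.log_pos one_lt_two]
        rw [indicator_of_notMem (by rw [mem_Ioi]; exact not_lt.2 hu.le)]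
        exact tendsto_const_nhds.congr' hz
      · exact absurd hu hu0
      · rw [indicator_of_mem (mem_Ioi.2 hu)]
        have hev : ∀ᶠ ε in 𝓝[>](0:ℝ), h ε u = (Ioi (ε * Real.log 2)).indicator (h ε) u := by
          have hmem : (0:ℝ) ∈ Ico (0:ℝ) (u / Real.log 2) :=
            ⟨le_refl 0, by positivity⟩
          filter_upwards [Ioo_mem_nhdsGT_of_mem hmem] with ε hε
          rw [indicator_of_mem]
          rw [mem_Ioi]
          have h2 := hε.2
          rw [lt_div_iff₀ (Real.log_pos one_lt_two)] at h2
          exact h2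
        refine Tendsto.congr' hev ?_
        have hA : Tendsto (fun ε : ℝ => Real.exp (-(u/ε))) (𝓝[>](0:ℝ)) (𝓝 0) := by
          have h1 : Tendsto (fun ε : ℝ => u / ε) (𝓝[>](0:ℝ)) atTop := by
            simpa [div_eq_mul_inv] using (tendsto_inv_nhdsGT_zero.const_mul_atTop hu)
          exact Real.tendsto_exp_neg_atTop_nhds_zero.comp h1
        have hbase : Tendsto (fun ε : ℝ => 1 - Real.exp (-(u/ε))) (𝓝[>](0:ℝ)) (𝓝 1) := by
          simpa using (tendsto_const_nhds.sub hA)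
        have hB : Tendsto (fun ε : ℝ => (1 - Real.exp (-(u/ε))) ^ (ε*b-1)) (𝓝[>](0:ℝ)) (𝓝 1) := by
          have hexp2 : Tendsto (fun ε : ℝ => ε * b - 1) (𝓝[>](0:ℝ)) (𝓝 (-1)) := by
            have h3 : Tendsto (fun ε : ℝ => ε * b - 1) (𝓝 (0:ℝ)) (𝓝 (0 * b - 1)) :=
              (tendsto_id.mul_const b).sub tendsto_const_nhds
            simpa using h3.mono_left nhdsWithin_le_nhds
          simpa using hbase.rpow hexp2 (Or.inl one_ne_zero)
        have hC : Tendsto (fun ε : ℝ => -ε * Real.log (1 - Real.exp (-(u/ε))))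
            (𝓝[>](0:ℝ)) (𝓝 0) := by
          have hlog : Tendsto (fun ε : ℝ => Real.log (1 - Real.exp (-(u/ε))))
              (𝓝[>](0:ℝ)) (𝓝 0) := by
            have h4 := (Real.continuousAt_log one_ne_zero).tendsto
            have := h4.comp hbase
            simpa [Real.log_one, Function.comp_def] using this
          have hneg : Tendsto (fun ε : ℝ => -ε) (𝓝[>](0:ℝ)) (𝓝 0) := by
            have : Tendsto (fun ε : ℝ => -ε) (𝓝 (0:ℝ)) (𝓝 (-0)) := tendsto_id.neg
            simpa using this.mono_left nhdsWithin_le_nhds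
          simpa using hneg.mul hlog
        have hF : Tendsto (fun ε : ℝ => (F (u, -ε * Real.log (1 - Real.exp (-(u/ε)))) : ℝ))
            (𝓝[>](0:ℝ)) (𝓝 (F (u,0))) := by
          have := (F.continuous.tendsto (u, 0)).comp (tendsto_const_nhds.prodMk_nhds hC)
          simpa [Function.comp_def] using this
        have hfin := (((tendsto_const_nhds :
            Tendsto (fun _ : ℝ => Real.exp (-(a*u))) (𝓝[>](0:ℝ)) _)).mul hB).mul hF
        rw [hh]
        simpa using hfin
  rw [integral_indicator measurableSet_Ioi] at hlim
  exact Tendsto.congr' (heq.mono fun ε h => h.symm) hlim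

lemma aux_integrableOn (a b ε : ℝ) (ha : 0 < a) (hb : 0 < b) (hε : 0 < ε)
    (F : BoundedContinuousFunction (ℝ × ℝ) ℝ) :
    IntegrableOn (fun x => x ^ (ε*a-1) * (1-x) ^ (ε*b-1) *
      F (-ε * Real.log x, -ε * Real.log (1-x))) (Ioo (0:ℝ) (1/2)) := by
  have hmeas : AEStronglyMeasurable (fun x : ℝ => x ^ (ε*a-1) * (1-x) ^ (ε*b-1) *
      F (-ε * Real.log x, -ε * Real.log (1-x))) (volume.restrict (Ioo (0:ℝ) (1/2))) := by
    refine Measurable.aestronglyMeasurable ?_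
    exact ((by fun_prop : Measurable fun x : ℝ => x ^ (ε*a-1)).mul
      (by fun_prop : Measurable fun x : ℝ => (1-x) ^ (ε*b-1))).mul
      (F.continuous.measurable.comp ((measurable_id.log.const_mul (-ε)).prodMk
        ((measurable_const.sub measurable_id).log.const_mul (-ε))))
  refine Integrable.mono' (g := fun x => x ^ (ε*a-1) * (2 * ‖F‖)) ?_ hmeas ?_
  · have h1 : IntervalIntegrable (fun x : ℝ => x ^ (ε*a-1)) volume 0 (1/2) :=
      intervalIntegral.intervalIntegrable_rpow' (by nlinarith)
    exact ((h1.1).mono_set Ioo_subset_Ioc_self).mul_const _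
  · refine (ae_restrict_iff' measurableSet_Ioo).2 (Filter.Eventually.of_forall fun x hx => ?_)
    obtain ⟨hx0, hx2⟩ := hx
    have hB : (1-x) ^ (ε*b-1) ≤ 2 := aux_rpow_le_two (by linarith) (by linarith) (by nlinarith)
    rw [norm_mul, norm_mul, Real.norm_eq_abs (x ^ (ε*a-1)), Real.norm_eq_abs ((1-x) ^ (ε*b-1)),
      abs_of_nonneg (Real.rpow_nonneg hx0.le _),
      abs_of_nonneg (Real.rpow_nonneg (by linarith : (0:ℝ) ≤ 1 - x) _), mul_assoc]
    exact mul_le_mul le_rfl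
      (mul_le_mul hB (F.norm_coe_le_norm _) (norm_nonneg _) (by norm_num))
      (mul_nonneg (Real.rpow_nonneg (by linarith) _) (norm_nonneg _)) (Real.rpow_nonneg hx0.le _)

lemma aux_reflect_image : (fun x : ℝ => 1 - x) '' Ioo (0:ℝ) (1/2) = Ioo (1/2:ℝ) 1 := by
  rw [Set.image_const_sub_Ioo]; norm_num

lemma aux_reflect_deriv : ∀ x ∈ Ioo (0:ℝ) (1/2),
    HasDerivWithinAt (fun x : ℝ => 1 - x) (-1) (Ioo (0:ℝ) (1/2)) x :=
  fun x _ => ((hasDerivAt_id x).const_sub 1).hasDerivWithinAt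

lemma aux_reflect_inj : InjOn (fun x : ℝ => 1 - x) (Ioo (0:ℝ) (1/2)) :=
  fun x _ y _ h => by dsimp only at h; linarith

lemma aux_reflect_integral (g : ℝ → ℝ) :
    ∫ x in Ioo (1/2:ℝ) 1, g x = ∫ x in Ioo (0:ℝ) (1/2), g (1-x) := by
  rw [← aux_reflect_image,
    integral_image_eq_integral_abs_deriv_smul measurableSet_Ioo aux_reflect_deriv aux_reflect_inj g]
  simp

lemma aux_reflect_integrable (g : ℝ → ℝ)
    (hg : IntegrableOn (fun x => g (1-x)) (Ioo (0:ℝ) (1/2))) :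
    IntegrableOn g (Ioo (1/2:ℝ) 1) := by
  rw [← aux_reflect_image,
    integrableOn_image_iff_integrableOn_abs_deriv_smul measurableSet_Ioo aux_reflect_deriv
      aux_reflect_inj g]
  simpa using hg

lemma aux_expMeasure_integral {r : ℝ} (hr : 0 < r) (g : ℝ → ℝ) (hg : Measurable g) :
    ∫ x, g x ∂(expMeasure r) = ∫ x in Ioi (0:ℝ), r * (Real.exp (-(r*x)) * g x) := by
  have hme : expMeasure r
      = volume.withDensity (fun x => ((gammaPDFReal 1 r x).toNNReal : ℝ≥0∞)) := rfl
  rw [hme, integral_withDensity_eq_integral_smul (measurable_gammaPDFReal 1 r).real_toNNReal]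
  have hpt : ∀ x : ℝ, (gammaPDFReal 1 r x).toNNReal • g x
      = (Ici (0:ℝ)).indicator (fun x => r * (Real.exp (-(r*x)) * g x)) x := by
    intro x
    have hnn : 0 ≤ gammaPDFReal 1 r x := by
      unfold gammaPDFReal
      rw [Real.Gamma_one, Real.rpow_one]
      split
      · positivity
      · exact le_rfl
    rw [NNReal.smul_def, smul_eq_mul, Real.coe_toNNReal _ hnn]
    by_cases hx : (0:ℝ) ≤ x
    · rw [indicator_of_mem (mem_Ici.2 hx)]
      unfold gammaPDFReal
      rw [if_pos hx, Real.Gamma_one, sub_self, Real.rpow_zero, Real.rpow_one]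
      ring
    · rw [indicator_of_notMem (fun hc => hx (mem_Ici.1 hc))]
      unfold gammaPDFReal
      rw [if_neg hx, zero_mul]
  calc ∫ x, (gammaPDFReal 1 r x).toNNReal • g x
      = ∫ x, (Ici (0:ℝ)).indicator (fun x => r * (Real.exp (-(r*x)) * g x)) x :=
        integral_congr_ae (Filter.Eventually.of_forall hpt)
    _ = ∫ x in Ici (0:ℝ), r * (Real.exp (-(r*x)) * g x) := integral_indicator measurableSet_Ici
    _ = ∫ x in Ioi (0:ℝ), r * (Real.exp (-(r*x)) * g x) := integral_Ici_eq_integral_Ioi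

lemma aux_gamma_tendsto (α β : ℝ) (hα : 0 < α) (hβ : 0 < β) :
    Tendsto (fun ε : ℝ => Real.Gamma (ε*α + ε*β) / (Real.Gamma (ε*α) * Real.Gamma (ε*β)) / ε)
      (nhdsWithin 0 (Ioi 0)) (nhds (α*β/(α+β))) := by
  have hcont : ContinuousAt Real.Gamma 1 :=
    (Real.differentiableAt_Gamma
      (fun m => ne_of_gt (lt_of_le_of_lt (neg_nonpos.mpr (Nat.cast_nonneg m)) one_pos))).continuousAt
  have t1 : Tendsto (fun ε : ℝ => ε*α + ε*β + 1) (nhds 0) (nhds 1) := by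
    have := (((tendsto_id (x := nhds (0:ℝ))).mul_const α).add
      ((tendsto_id (x := nhds (0:ℝ))).mul_const β)).add_const 1
    simpa using this
  have t2 : Tendsto (fun ε : ℝ => ε*α + 1) (nhds 0) (nhds 1) := by
    have := ((tendsto_id (x := nhds (0:ℝ))).mul_const α).add_const 1
    simpa using this
  have t3 : Tendsto (fun ε : ℝ => ε*β + 1) (nhds 0) (nhds 1) := by
    have := ((tendsto_id (x := nhds (0:ℝ))).mul_const β).add_const 1
    simpa using this
  have hnum := (hcont.tendsto.comp t1)
  have hd1 := (hcont.tendsto.comp t2)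
  have hd2 := (hcont.tendsto.comp t3)
  rw [Real.Gamma_one] at hnum hd1 hd2
  have hE : Tendsto (fun ε : ℝ => Real.Gamma (ε*α + ε*β + 1) /
      (Real.Gamma (ε*α + 1) * Real.Gamma (ε*β + 1)) * (α*β/(α+β)))
      (nhds 0) (nhds (α*β/(α+β))) := by
    have := (hnum.div (hd1.mul hd2) (by norm_num)).mul_const (α*β/(α+β))
    simpa using this
  refine Tendsto.congr' ?_ (hE.mono_left nhdsWithin_le_nhds)
  filter_upwards [self_mem_nhdsWithin] with ε (hε : ε ∈ Ioi 0)
  rw [mem_Ioi] at hε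
  have hxα : (0:ℝ) < ε*α := by positivity
  have hxβ : (0:ℝ) < ε*β := by positivity
  have hxs : (0:ℝ) < ε*α + ε*β := by positivity
  rw [Real.Gamma_add_one hxs.ne', Real.Gamma_add_one hxα.ne', Real.Gamma_add_one hxβ.ne']
  have g1 : Real.Gamma (ε*α) ≠ 0 := (Real.Gamma_pos_of_pos hxα).ne'
  have g2 : Real.Gamma (ε*β) ≠ 0 := (Real.Gamma_pos_of_pos hxβ).ne'
  have hab : α + β ≠ 0 := by positivity
  field_simp

/-- If `B_ε ~ Beta(εα, εβ)`, then as `ε → 0+` the pair `(-ε log B_ε, -ε log(1-B_ε))`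
converges in distribution to `(ξ E_α, (1-ξ) E_β)`, where `ξ` is Bernoulli with
`P(ξ=1) = β/(α+β)` and `E_α, E_β` are exponential with rates `α, β`, independent of `ξ`;
equivalently, for every bounded continuous test function `f`, the expectations converge to
`β/(α+β) · E[f(E_α, 0)] + α/(α+β) · E[f(0, E_β)]`. -/
theorem beta_to_exponential_zero_temperature (α β : ℝ) (hα : 0 < α) (hβ : 0 < β)
    (f : BoundedContinuousFunction (ℝ × ℝ) ℝ) :
    Tendsto
      (fun ε : ℝ =>
        ∫ x, f (-ε * Real.log x, -ε * Real.log (1 - x)) ∂(_root_.betaMeasure (ε * α) (ε * β)))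
      (nhdsWithin 0 (Set.Ioi 0))
      (nhds
        (β / (α + β) * ∫ e, f (e, 0) ∂(expMeasure α) +
          α / (α + β) * ∫ e, f (0, e) ∂(expMeasure β))) := by
  set G := f.compContinuous (⟨Prod.swap, continuous_swap⟩ : C(ℝ × ℝ, ℝ × ℝ)) with hGdef
  have hG : ∀ p q : ℝ, G (p, q) = f (q, p) := fun p q => rfl
  have heq : ∀ᶠ ε in nhdsWithin (0:ℝ) (Ioi 0),
      (∫ x, f (-ε * Real.log x, -ε * Real.log (1 - x)) ∂(_root_.betaMeasure (ε * α) (ε * β)))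
      = (Real.Gamma (ε*α + ε*β) / (Real.Gamma (ε*α) * Real.Gamma (ε*β)) / ε) *
        ((ε * ∫ x in Ioo (0:ℝ) (1/2), x ^ (ε*α-1) * (1-x) ^ (ε*β-1) *
            f (-ε * Real.log x, -ε * Real.log (1-x))) +
         (ε * ∫ x in Ioo (0:ℝ) (1/2), x ^ (ε*β-1) * (1-x) ^ (ε*α-1) *
            G (-ε * Real.log x, -ε * Real.log (1-x)))) := by
    filter_upwards [self_mem_nhdsWithin] with ε (hε : ε ∈ Ioi 0)
    rw [mem_Ioi] at hε
    have hρmeas : Measurable fun x : ℝ => (if x ∈ Ioo (0:ℝ) 1 then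
        Real.Gamma (ε*α + ε*β) / (Real.Gamma (ε*α) * Real.Gamma (ε*β)) *
          x ^ (ε*α - 1) * (1 - x) ^ (ε*β - 1) else 0) :=
      Measurable.ite measurableSet_Ioo (by fun_prop) measurable_const
    have hme : _root_.betaMeasure (ε*α) (ε*β) = volume.withDensity (fun x =>
        (((if x ∈ Ioo (0:ℝ) 1 then Real.Gamma (ε*α + ε*β) /
          (Real.Gamma (ε*α) * Real.Gamma (ε*β)) * x ^ (ε*α - 1) * (1 - x) ^ (ε*β - 1)
          else 0)).toNNReal : ℝ≥0∞)) := rfl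
    rw [hme, integral_withDensity_eq_integral_smul hρmeas.real_toNNReal]
    have hCpos : 0 < Real.Gamma (ε*α + ε*β) / (Real.Gamma (ε*α) * Real.Gamma (ε*β)) := by
      have h1 := Real.Gamma_pos_of_pos (show (0:ℝ) < ε*α by positivity)
      have h2 := Real.Gamma_pos_of_pos (show (0:ℝ) < ε*β by positivity)
      have h3 := Real.Gamma_pos_of_pos (show (0:ℝ) < ε*α+ε*β by positivity)
      positivity
    have hpt : ∀ x : ℝ, ((if x ∈ Ioo (0:ℝ) 1 then Real.Gamma (ε*α + ε*β) /
        (Real.Gamma (ε*α) * Real.Gamma (ε*β)) * x ^ (ε*α-1) * (1-x) ^ (ε*β-1) else 0)).toNNReal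
        • f (-ε * Real.log x, -ε * Real.log (1 - x))
        = (Ioo (0:ℝ) 1).indicator (fun x =>
            Real.Gamma (ε*α + ε*β) / (Real.Gamma (ε*α) * Real.Gamma (ε*β)) *
            (x ^ (ε*α-1) * (1-x) ^ (ε*β-1) *
              f (-ε * Real.log x, -ε * Real.log (1-x)))) x := by
      intro x
      by_cases hx : x ∈ Ioo (0:ℝ) 1
      · have hx1 : (0:ℝ) < x := hx.1
        have hx2 : (0:ℝ) < 1 - x := by have := hx.2; linarith
        rw [if_pos hx, indicator_of_mem hx, NNReal.smul_def, smul_eq_mul,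
          Real.coe_toNNReal _ (by positivity)]
        ring
      · rw [if_neg hx, indicator_of_notMem hx]
        simp
    rw [integral_congr_ae (Filter.Eventually.of_forall hpt),
      integral_indicator measurableSet_Ioo, integral_const_mul]
    have hsplit : Ioo (0:ℝ) 1 = Ioo (0:ℝ) (1/2) ∪ Ico (1/2) 1 :=
      (Ioo_union_Ico_eq_Ioo (by norm_num) (by norm_num)).symm
    have hdisj : Disjoint (Ioo (0:ℝ) (1/2)) (Ico (1/2:ℝ) 1) := by
      refine Set.disjoint_left.mpr ?_
      rintro x ⟨_, h2⟩ ⟨h3, _⟩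
      linarith
    have hint1 := aux_integrableOn α β ε hα hβ hε f
    have hGEq : EqOn (fun x : ℝ => x ^ (ε*β-1) * (1-x) ^ (ε*α-1) *
          G (-ε * Real.log x, -ε * Real.log (1-x)))
        (fun x : ℝ => (fun x => x ^ (ε*α-1) * (1-x) ^ (ε*β-1) *
          f (-ε*Real.log x, -ε*Real.log (1-x))) (1-x)) (Ioo (0:ℝ) (1/2)) := by
      intro x hx
      simp only [sub_sub_cancel]
      rw [hG]
      ring
    have hint2 : IntegrableOn (fun x => x ^ (ε*α-1) * (1-x) ^ (ε*β-1) *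
        f (-ε * Real.log x, -ε * Real.log (1-x))) (Ico (1/2:ℝ) 1) := by
      rw [integrableOn_Ico_iff_integrableOn_Ioo]
      refine aux_reflect_integrable _ ?_
      exact ((aux_integrableOn β α ε hβ hα hε G).congr_fun hGEq measurableSet_Ioo)
    rw [hsplit, setIntegral_union hdisj measurableSet_Ico hint1 hint2,
      integral_Ico_eq_integral_Ioo, aux_reflect_integral,
      ← setIntegral_congr_fun measurableSet_Ioo hGEq]
    field_simp
  have h1 := key α β hα hβ f
  have h2 := key β α hβ hα G
  have h3 := aux_gamma_tendsto α β hα hβ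
  have htot := h3.mul (h1.add h2)
  have hval : (β / (α + β) * ∫ e, f (e, 0) ∂(expMeasure α) +
      α / (α + β) * ∫ e, f (0, e) ∂(expMeasure β))
      = α*β/(α+β) * ((∫ u in Ioi (0:ℝ), Real.exp (-(α*u)) * f (u, 0)) +
        (∫ u in Ioi (0:ℝ), Real.exp (-(β*u)) * G (u, 0))) := by
    rw [aux_expMeasure_integral hα (fun e => f (e,0))
        (f.continuous.measurable.comp (measurable_id.prodMk measurable_const)),
      aux_expMeasure_integral hβ (fun e => f (0,e))
        (f.continuous.measurable.comp (measurable_const.prodMk measurable_id)),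
      integral_const_mul, integral_const_mul]
    have hGf : (∫ u in Ioi (0:ℝ), Real.exp (-(β*u)) * G (u, 0))
        = ∫ u in Ioi (0:ℝ), Real.exp (-(β*u)) * f (0, u) := rfl
    rw [hGf]
    have hab : α + β ≠ 0 := by positivity
    field_simp
  rw [hval]
  exact Tendsto.congr' (heq.mono fun ε h => h.symm) htot
end

section
/- For the birth-death chain on ℤ≥0 with absorbing state 0 and rates rate(k → k−1) = 1−q, rate(k → k+1) = k/t for k ≥ 1, the space of bounded functions h: ℤ≥0 → ℝ satisfying h(0) = 0, the harmonicity condition (1−q)h(n−1) + (n/t)h(n+1) = (1−q + n/t)h(n) for all n ≥ 1, and the normalization lim_{n→∞} h(n) = 1, contains at most one element. -/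
open Filter

/-- For the birth-death chain on `ℤ≥0` with absorbing state `0` and rates
`rate(k → k-1) = 1-q`, `rate(k → k+1) = k/t` for `k ≥ 1`, there is at most one bounded
function `h : ℕ → ℝ` with `h 0 = 0`, harmonic for the chain, and with `h n → 1`. -/
theorem transient_qBoson_harmonic_unique (q t : ℝ) (hq0 : 0 < q) (hq1 : q < 1)
    (ht : 0 < t) (h₁ h₂ : ℕ → ℝ)
    (hb₁ : ∃ C : ℝ, ∀ n : ℕ, |h₁ n| ≤ C) (hb₂ : ∃ C : ℝ, ∀ n : ℕ, |h₂ n| ≤ C)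
    (h0₁ : h₁ 0 = 0) (h0₂ : h₂ 0 = 0)
    (harm₁ : ∀ n : ℕ, 1 ≤ n →
      (1 - q) * h₁ (n - 1) + ((n : ℝ) / t) * h₁ (n + 1) = (1 - q + (n : ℝ) / t) * h₁ n)
    (harm₂ : ∀ n : ℕ, 1 ≤ n →
      (1 - q) * h₂ (n - 1) + ((n : ℝ) / t) * h₂ (n + 1) = (1 - q + (n : ℝ) / t) * h₂ n)
    (hlim₁ : Tendsto h₁ atTop (nhds 1)) (hlim₂ : Tendsto h₂ atTop (nhds 1)) :
    h₁ = h₂ := by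
  set g : ℕ → ℝ := fun n => h₁ n - h₂ n with hg
  set c : ℝ := (1 - q) * t with hc
  have hc0 : 0 < c := mul_pos (by linarith) ht
  have ht' : t ≠ 0 := ne_of_gt ht
  have hg0 : g 0 = 0 := by simp [hg, h0₁, h0₂]
  -- increments
  have key : ∀ n : ℕ, g (n + 1) - g n = g 1 * c ^ n / (n.factorial : ℝ) := by
    intro n
    induction n with
    | zero => simp [hg0]
    | succ n ih =>
      have e₁ := harm₁ (n + 1) (by omega)
      have e₂ := harm₂ (n + 1) (by omega)
      have hn1 : ((n : ℝ) + 1) ≠ 0 := by positivity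
      have e : (1 - q) * g n + (((n : ℝ) + 1) / t) * g (n + 2) =
          (1 - q + ((n : ℝ) + 1) / t) * g (n + 1) := by
        rw [hg]
        simp only [Nat.add_sub_cancel] at e₁ e₂
        push_cast at e₁ e₂ ⊢
        ring_nf
        ring_nf at e₁ e₂
        linarith
      have hr : (((n : ℝ) + 1) / t) ≠ 0 := div_ne_zero hn1 ht'
      have e' : g (n + 2) - g (n + 1) =
          ((1 - q) * t / ((n : ℝ) + 1)) * (g (n + 1) - g n) := by
        field_simp at e ⊢
        linarith
      rw [e', ih]
      have hfac : ((n.factorial : ℝ)) ≠ 0 := by positivity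
      rw [Nat.factorial_succ]
      push_cast
      field_simp
      ring
  have gsum : ∀ n : ℕ, g n = g 1 * ∑ k ∈ Finset.range n, c ^ k / (k.factorial : ℝ) := by
    intro n
    induction n with
    | zero => simp [hg0]
    | succ n ih =>
      have := key n
      rw [Finset.sum_range_succ]
      have : g (n + 1) = g n + (g (n + 1) - g n) := by ring
      rw [this, key n, ih]
      ring
  have hglim : Tendsto g atTop (nhds 0) := by
    have := hlim₁.sub hlim₂
    simpa using this
  have habs : Tendsto (fun n => |g n|) atTop (nhds 0) := by
    simpa using hglim.abs
  have hge : ∀ᶠ n : ℕ in atTop, |g 1| ≤ |g n| := by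
    filter_upwards [eventually_ge_atTop 1] with n hn
    have hS : (1 : ℝ) ≤ ∑ k ∈ Finset.range n, c ^ k / (k.factorial : ℝ) := by
      have h0mem : (0 : ℕ) ∈ Finset.range n := Finset.mem_range.mpr hn
      have := Finset.single_le_sum
        (f := fun k => c ^ k / (k.factorial : ℝ))
        (fun k _ => by positivity) h0mem
      simpa using this
    calc |g 1| = |g 1| * 1 := by ring
      _ ≤ |g 1| * |∑ k ∈ Finset.range n, c ^ k / (k.factorial : ℝ)| := by
          apply mul_le_mul_of_nonneg_left _ (abs_nonneg _)
          rw [abs_of_nonneg (by linarith)]; exact hS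
      _ = |g 1 * ∑ k ∈ Finset.range n, c ^ k / (k.factorial : ℝ)| := (abs_mul _ _).symm
      _ = |g n| := by rw [← gsum n]
  have h1le : |g 1| ≤ 0 := ge_of_tendsto habs hge
  have h1 : g 1 = 0 := abs_eq_zero.mp (le_antisymm h1le (abs_nonneg _))
  funext n
  have := gsum n
  rw [h1, zero_mul] at this
  have : h₁ n - h₂ n = 0 := this
  linarith
end
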